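/- Let M be the double star block matrix with xᵀy ≠ 0, zᵀw = 0, a, b ≠ 0, ζ := xᵀy + ab ≠ 0, and suppose h := bb̄ + y*y ≠ 0 and β := ζζ̄ + bb̄·w*w ≠ 0. Then X = [[0, h⁻¹y*, h⁻¹b̄, 0],[β⁻¹ζ̄y, 0, 0, β⁻¹b̄yw*],[β⁻¹ζ̄b, 0, 0, β⁻¹bb̄w*],[0, bh⁻¹ζ⁻¹wy*, bb̄h⁻¹ζ⁻¹w, 0]] is the core EP inverse of M: X M⁴ = M³, M X² = X, and (MX)* = MX. -/

import Mathlib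

open Matrix BigOperators

noncomputable section

abbrev Idx (m n : ℕ) := (Unit ⊕ Fin m) ⊕ (Unit ⊕ Fin n)

/-- 4×4 block builder for matrices indexed by a double star digraph vertex set:
the blocks correspond to the first center, the first star's leaves, the second
center and the second star's leaves, in this order. -/
def blk {m n : ℕ}
    (A11 : ℂ) (A12 : Fin m → ℂ) (A13 : ℂ) (A14 : Fin n → ℂ)
    (A21 : Fin m → ℂ) (A22 : Fin m → Fin m → ℂ) (A23 : Fin m → ℂ) (A24 : Fin m → Fin n → ℂ)
    (A31 : ℂ) (A32 : Fin m → ℂ) (A33 : ℂ) (A34 : Fin n → ℂ)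
    (A41 : Fin n → ℂ) (A42 : Fin n → Fin m → ℂ) (A43 : Fin n → ℂ) (A44 : Fin n → Fin n → ℂ) :
    Matrix (Idx m n) (Idx m n) ℂ :=
  Matrix.of fun i j =>
    match i, j with
    | .inl (.inl _), .inl (.inl _) => A11
    | .inl (.inl _), .inl (.inr k) => A12 k
    | .inl (.inl _), .inr (.inl _) => A13
    | .inl (.inl _), .inr (.inr k) => A14 k
    | .inl (.inr i'), .inl (.inl _) => A21 i'
    | .inl (.inr i'), .inl (.inr k) => A22 i' k
    | .inl (.inr i'), .inr (.inl _) => A23 i'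
    | .inl (.inr i'), .inr (.inr k) => A24 i' k
    | .inr (.inl _), .inl (.inl _) => A31
    | .inr (.inl _), .inl (.inr k) => A32 k
    | .inr (.inl _), .inr (.inl _) => A33
    | .inr (.inl _), .inr (.inr k) => A34 k
    | .inr (.inr i'), .inl (.inl _) => A41 i'
    | .inr (.inr i'), .inl (.inr k) => A42 i' k
    | .inr (.inr i'), .inr (.inl _) => A43 i'
    | .inr (.inr i'), .inr (.inr k) => A44 i' k

/-- The canonical matrix `[[0, xᵀ, a, 0],[y, 0, 0, 0],[b, 0, 0, zᵀ],[0, 0, w, 0]]`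
associated with a double star digraph. -/
def dsM {m n : ℕ} (a b : ℂ) (x y : Fin m → ℂ) (z w : Fin n → ℂ) :
    Matrix (Idx m n) (Idx m n) ℂ :=
  blk 0 x a (fun _ => 0)
      y (fun _ _ => 0) (fun _ => 0) (fun _ _ => 0)
      b (fun _ => 0) 0 z
      (fun _ => 0) (fun _ _ => 0) w (fun _ _ => 0)

/-- `xᵀy`. -/
def dotT {k : ℕ} (x y : Fin k → ℂ) : ℂ := ∑ i, x i * y i

/-- `x*x = ∑ conj xᵢ · xᵢ`. -/
def gram {k : ℕ} (x : Fin k → ℂ) : ℂ := ∑ i, star (x i) * x i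

end

lemma sum_pull {k : ℕ} (f g : Fin k → ℂ) (c : ℂ) (h : ∀ i, f i = c * g i) :
    ∑ i, f i = c * ∑ i, g i := by
  rw [Finset.mul_sum]; exact Finset.sum_congr rfl fun i _ => h i

section
variable {m n : ℕ} (a b : ℂ) (x y : Fin m → ℂ) (z w : Fin n → ℂ)

set_option maxHeartbeats 1000000 in
lemma L3 (hzw : dotT z w = 0) :
    (dsM a b x y z w * dsM a b x y z w) * dsM a b x y z w =
    blk 0 (fun j => (dotT x y + a*b) * x j) (a * (dotT x y + a*b)) (fun _ => 0)
        (fun i => (dotT x y + a*b) * y i) (fun _ _ => 0) (fun _ => 0) (fun i j => a * y i * z j)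
        ((dotT x y + a*b) * b) (fun _ => 0) 0 (fun j => a * b * z j)
        (fun _ => 0) (fun i j => b * w i * x j) (fun i => a * b * w i) (fun _ _ => 0) := by
  have hzw' : (∑ i, z i * w i) = 0 := hzw
  ext i j
  rcases i with (i|i) | (i|i) <;> rcases j with (j|j) | (j|j) <;>
    simp only [dsM, blk, Matrix.mul_apply, Matrix.of_apply, Fintype.sum_sum_type,
      Fintype.sum_unique, dotT, mul_zero, zero_mul, add_zero, zero_add,
      Finset.sum_const_zero, hzw']
  all_goals try (simp only [← Finset.mul_sum, ← Finset.sum_mul, mul_assoc, mul_left_comm,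
    mul_comm, hzw']; ring_nf; try simp [hzw', Finset.mul_sum])
  all_goals try (exact Finset.sum_congr rfl fun k _ => by ring)
  all_goals try ring1
  · rw [sum_pull (fun k => w i * z k * w k) (fun k => z k * w k) (w i) (fun k => by ring),
      hzw', mul_zero]
end

section
variable {m n : ℕ} (a b : ℂ) (x y : Fin m → ℂ) (z w : Fin n → ℂ)

set_option maxHeartbeats 1000000 in
lemma L4 (hzw : dotT z w = 0) :
    (blk 0 (fun j => (dotT x y + a*b) * x j) (a * (dotT x y + a*b)) (fun _ => 0)
        (fun i => (dotT x y + a*b) * y i) (fun _ _ => 0) (fun _ => 0) (fun i j => a * y i * z j)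
        ((dotT x y + a*b) * b) (fun _ => 0) 0 (fun j => a * b * z j)
        (fun _ => 0) (fun i j => b * w i * x j) (fun i => a * b * w i) (fun _ _ => 0))
      * dsM a b x y z w =
    blk ((dotT x y + a*b) * (dotT x y + a*b)) (fun _ => 0) 0 (fun j => a * (dotT x y + a*b) * z j)
        (fun _ => 0) (fun i j => (dotT x y + a*b) * y i * x j) (fun i => a * (dotT x y + a*b) * y i) (fun _ _ => 0)
        0 (fun j => (dotT x y + a*b) * b * x j) (a * b * (dotT x y + a*b)) (fun _ => 0)
        (fun i => b * (dotT x y + a*b) * w i) (fun _ _ => 0) (fun _ => 0) (fun i j => a * b * w i * z j) := by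
  have hzw' : (∑ i, z i * w i) = 0 := hzw
  ext i j
  rcases i with (i|i) | (i|i) <;> rcases j with (j|j) | (j|j) <;>
    simp only [dsM, blk, Matrix.mul_apply, Matrix.of_apply, Fintype.sum_sum_type,
      Fintype.sum_unique, dotT, mul_zero, zero_mul, add_zero, zero_add,
      Finset.sum_const_zero, hzw']
  all_goals try (simp only [← Finset.mul_sum, ← Finset.sum_mul, mul_assoc, mul_left_comm,
    mul_comm, hzw']; ring_nf; try simp [hzw', Finset.mul_sum])
  all_goals try (exact Finset.sum_congr rfl fun k _ => by ring)
  all_goals try ring1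
  all_goals try (simp only [Finset.sum_add_distrib, ← Finset.sum_mul, ← Finset.mul_sum,
    mul_assoc, mul_left_comm, mul_comm, hzw']; ring_nf; try simp [hzw', Finset.mul_sum]; try ring)
  all_goals try (rw [sq, Finset.sum_mul_sum]; exact Finset.sum_congr rfl fun k _ => (Finset.sum_congr rfl fun l _ => by ring))
end

section
variable {m n : ℕ} (a b : ℂ) (x y : Fin m → ℂ) (z w : Fin n → ℂ)

set_option maxHeartbeats 1000000 in
lemma L5 (hζ : dotT x y + a * b ≠ 0)
    (hh : b * star b + gram y ≠ 0)
    (hβ : (dotT x y + a * b) * star (dotT x y + a * b) + b * star b * gram w ≠ 0) :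
    (blk 0 (fun j => (b * star b + gram y)⁻¹ * star (y j)) ((b * star b + gram y)⁻¹ * star b) (fun _ => 0)
        (fun i => ((dotT x y + a*b) * star (dotT x y + a*b) + b * star b * gram w)⁻¹ * star (dotT x y + a*b) * y i)
          (fun _ _ => 0) (fun _ => 0)
          (fun i j => ((dotT x y + a*b) * star (dotT x y + a*b) + b * star b * gram w)⁻¹ * star b * y i * star (w j))
        (((dotT x y + a*b) * star (dotT x y + a*b) + b * star b * gram w)⁻¹ * star (dotT x y + a*b) * b)
          (fun _ => 0) 0
          (fun j => ((dotT x y + a*b) * star (dotT x y + a*b) + b * star b * gram w)⁻¹ * b * star b * star (w j))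
        (fun _ => 0)
          (fun i j => b * (b * star b + gram y)⁻¹ * (dotT x y + a*b)⁻¹ * w i * star (y j))
          (fun i => b * star b * (b * star b + gram y)⁻¹ * (dotT x y + a*b)⁻¹ * w i) (fun _ _ => 0))
      *
    (blk ((dotT x y + a*b) * (dotT x y + a*b)) (fun _ => 0) 0 (fun j => a * (dotT x y + a*b) * z j)
        (fun _ => 0) (fun i j => (dotT x y + a*b) * y i * x j) (fun i => a * (dotT x y + a*b) * y i) (fun _ _ => 0)
        0 (fun j => (dotT x y + a*b) * b * x j) (a * b * (dotT x y + a*b)) (fun _ => 0)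
        (fun i => b * (dotT x y + a*b) * w i) (fun _ _ => 0) (fun _ => 0) (fun i j => a * b * w i * z j))
    =
    blk 0 (fun j => (dotT x y + a*b) * x j) (a * (dotT x y + a*b)) (fun _ => 0)
        (fun i => (dotT x y + a*b) * y i) (fun _ _ => 0) (fun _ => 0) (fun i j => a * y i * z j)
        ((dotT x y + a*b) * b) (fun _ => 0) 0 (fun j => a * b * z j)
        (fun _ => 0) (fun i j => b * w i * x j) (fun i => a * b * w i) (fun _ _ => 0) := by
  set ζ : ℂ := dotT x y + a * b with hζd
  set h : ℂ := b * star b + gram y with hhd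
  set β : ℂ := ζ * star ζ + b * star b * gram w with hβd
  have hgy : (∑ i, star (y i) * y i) = gram y := rfl
  have hgw : (∑ i, star (w i) * w i) = gram w := rfl
  ext i j
  rcases i with (i|i) | (i|i) <;> rcases j with (j|j) | (j|j) <;>
    simp only [blk, Matrix.mul_apply, Matrix.of_apply, Fintype.sum_sum_type,
      Fintype.sum_unique, mul_zero, zero_mul, add_zero, zero_add, Finset.sum_const_zero]
  case inl.inl.inl.inr =>
    rw [sum_pull (fun k => h⁻¹ * star (y k) * (ζ * y k * x j)) (fun k => star (y k) * y k)
      (h⁻¹ * (ζ * x j)) (fun k => by ring), hgy]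
    field_simp
    try simp only [starRingEnd_apply]
    ring
  case inl.inl.inr.inl =>
    rw [sum_pull (fun k => h⁻¹ * star (y k) * (a * ζ * y k)) (fun k => star (y k) * y k)
      (h⁻¹ * (a * ζ)) (fun k => by ring), hgy]
    field_simp
    try simp only [starRingEnd_apply]
    ring
  case inl.inr.inl.inl =>
    rw [sum_pull (fun k => β⁻¹ * star b * y i * star (w k) * (b * ζ * w k)) (fun k => star (w k) * w k)
      (β⁻¹ * star b * y i * (b * ζ)) (fun k => by ring), hgw]
    field_simp
    try simp only [starRingEnd_apply]
    ring
  case inl.inr.inr.inr =>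
    rw [sum_pull (fun k => β⁻¹ * star b * y i * star (w k) * (a * b * w k * z j)) (fun k => star (w k) * w k)
      (β⁻¹ * star b * y i * (a * b * z j)) (fun k => by ring), hgw]
    field_simp
    try simp only [starRingEnd_apply]
    ring
  case inr.inl.inl.inl =>
    rw [sum_pull (fun k => β⁻¹ * b * star b * star (w k) * (b * ζ * w k)) (fun k => star (w k) * w k)
      (β⁻¹ * b * star b * (b * ζ)) (fun k => by ring), hgw]
    field_simp
    try simp only [starRingEnd_apply]
    ring
  case inr.inl.inr.inr =>
    rw [sum_pull (fun k => β⁻¹ * b * star b * star (w k) * (a * b * w k * z j)) (fun k => star (w k) * w k)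
      (β⁻¹ * b * star b * (a * b * z j)) (fun k => by ring), hgw]
    field_simp
    try simp only [starRingEnd_apply]
    ring
  case inr.inr.inl.inr =>
    rw [sum_pull (fun k => b * h⁻¹ * ζ⁻¹ * w i * star (y k) * (ζ * y k * x j)) (fun k => star (y k) * y k)
      (b * h⁻¹ * ζ⁻¹ * w i * (ζ * x j)) (fun k => by ring), hgy]
    field_simp
    try simp only [starRingEnd_apply]
    ring
  case inr.inr.inr.inl =>
    rw [sum_pull (fun k => b * h⁻¹ * ζ⁻¹ * w i * star (y k) * (a * ζ * y k)) (fun k => star (y k) * y k)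
      (b * h⁻¹ * ζ⁻¹ * w i * (a * ζ)) (fun k => by ring), hgy]
    field_simp
    try simp only [starRingEnd_apply]
    ring
end

section
variable {m n : ℕ} (a b : ℂ) (x y : Fin m → ℂ) (z w : Fin n → ℂ)

set_option maxHeartbeats 1000000 in
lemma L6 (hzw : dotT z w = 0) (hζ : dotT x y + a * b ≠ 0)
    (hh : b * star b + gram y ≠ 0)
    (hβ : (dotT x y + a * b) * star (dotT x y + a * b) + b * star b * gram w ≠ 0) :
    dsM a b x y z w *
    (blk 0 (fun j => (b * star b + gram y)⁻¹ * star (y j)) ((b * star b + gram y)⁻¹ * star b) (fun _ => 0)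
        (fun i => ((dotT x y + a*b) * star (dotT x y + a*b) + b * star b * gram w)⁻¹ * star (dotT x y + a*b) * y i)
          (fun _ _ => 0) (fun _ => 0)
          (fun i j => ((dotT x y + a*b) * star (dotT x y + a*b) + b * star b * gram w)⁻¹ * star b * y i * star (w j))
        (((dotT x y + a*b) * star (dotT x y + a*b) + b * star b * gram w)⁻¹ * star (dotT x y + a*b) * b)
          (fun _ => 0) 0
          (fun j => ((dotT x y + a*b) * star (dotT x y + a*b) + b * star b * gram w)⁻¹ * b * star b * star (w j))
        (fun _ => 0)
          (fun i j => b * (b * star b + gram y)⁻¹ * (dotT x y + a*b)⁻¹ * w i * star (y j))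
          (fun i => b * star b * (b * star b + gram y)⁻¹ * (dotT x y + a*b)⁻¹ * w i) (fun _ _ => 0))
    =
    blk (((dotT x y + a*b) * star (dotT x y + a*b) + b * star b * gram w)⁻¹ * ((dotT x y + a*b) * star (dotT x y + a*b)))
        (fun _ => 0) 0
        (fun j => ((dotT x y + a*b) * star (dotT x y + a*b) + b * star b * gram w)⁻¹ * star b * (dotT x y + a*b) * star (w j))
        (fun _ => 0)
        (fun i j => (b * star b + gram y)⁻¹ * y i * star (y j))
        (fun i => (b * star b + gram y)⁻¹ * star b * y i) (fun _ _ => 0)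
        0 (fun j => (b * star b + gram y)⁻¹ * b * star (y j)) ((b * star b + gram y)⁻¹ * (b * star b)) (fun _ => 0)
        (fun i => ((dotT x y + a*b) * star (dotT x y + a*b) + b * star b * gram w)⁻¹ * star (dotT x y + a*b) * b * w i)
        (fun _ _ => 0) (fun _ => 0)
        (fun i j => ((dotT x y + a*b) * star (dotT x y + a*b) + b * star b * gram w)⁻¹ * b * star b * w i * star (w j)) := by
  set ζ : ℂ := dotT x y + a * b with hζd
  set h : ℂ := b * star b + gram y with hhd
  set β : ℂ := ζ * star ζ + b * star b * gram w with hβd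
  have hdxy : (∑ i, x i * y i) = dotT x y := rfl
  have hdzw : (∑ i, z i * w i) = dotT z w := rfl
  ext i j
  rcases i with (i|i) | (i|i) <;> rcases j with (j|j) | (j|j) <;>
    simp only [dsM, blk, Matrix.mul_apply, Matrix.of_apply, Fintype.sum_sum_type,
      Fintype.sum_unique, mul_zero, zero_mul, add_zero, zero_add, Finset.sum_const_zero]
  all_goals try ring1
  case inl.inl.inl.inl =>
    rw [sum_pull (fun k => x k * (β⁻¹ * star ζ * y k)) (fun k => x k * y k)
      (β⁻¹ * star ζ) (fun k => by ring), hdxy]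
    field_simp
    simp only [hζd]
    try simp only [starRingEnd_apply]
  case inl.inl.inr.inr =>
    rw [sum_pull (fun k => x k * (β⁻¹ * star b * y k * star (w j))) (fun k => x k * y k)
      (β⁻¹ * star b * star (w j)) (fun k => by ring), hdxy]
    field_simp
    simp only [hζd]
    try simp only [starRingEnd_apply]
  case inr.inl.inl.inr =>
    rw [sum_pull (fun k => z k * (b * h⁻¹ * ζ⁻¹ * w k * star (y j))) (fun k => z k * w k)
      (b * h⁻¹ * ζ⁻¹ * star (y j)) (fun k => by ring), hdzw, hzw]
    field_simp
    ring
  case inr.inl.inr.inl =>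
    rw [sum_pull (fun k => z k * (b * star b * h⁻¹ * ζ⁻¹ * w k)) (fun k => z k * w k)
      (b * star b * h⁻¹ * ζ⁻¹) (fun k => by ring), hdzw, hzw]
    field_simp
    ring
end

section
variable {m n : ℕ} (a b : ℂ) (x y : Fin m → ℂ) (z w : Fin n → ℂ)

set_option maxHeartbeats 1000000 in
lemma L7 (hζ : dotT x y + a * b ≠ 0)
    (hh : b * star b + gram y ≠ 0)
    (hβ : (dotT x y + a * b) * star (dotT x y + a * b) + b * star b * gram w ≠ 0) :
    (blk (((dotT x y + a*b) * star (dotT x y + a*b) + b * star b * gram w)⁻¹ * ((dotT x y + a*b) * star (dotT x y + a*b)))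
        (fun _ => 0) 0
        (fun j => ((dotT x y + a*b) * star (dotT x y + a*b) + b * star b * gram w)⁻¹ * star b * (dotT x y + a*b) * star (w j))
        (fun _ => 0)
        (fun i j => (b * star b + gram y)⁻¹ * y i * star (y j))
        (fun i => (b * star b + gram y)⁻¹ * star b * y i) (fun _ _ => 0)
        0 (fun j => (b * star b + gram y)⁻¹ * b * star (y j)) ((b * star b + gram y)⁻¹ * (b * star b)) (fun _ => 0)
        (fun i => ((dotT x y + a*b) * star (dotT x y + a*b) + b * star b * gram w)⁻¹ * star (dotT x y + a*b) * b * w i)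
        (fun _ _ => 0) (fun _ => 0)
        (fun i j => ((dotT x y + a*b) * star (dotT x y + a*b) + b * star b * gram w)⁻¹ * b * star b * w i * star (w j)))
      *
    (blk 0 (fun j => (b * star b + gram y)⁻¹ * star (y j)) ((b * star b + gram y)⁻¹ * star b) (fun _ => 0)
        (fun i => ((dotT x y + a*b) * star (dotT x y + a*b) + b * star b * gram w)⁻¹ * star (dotT x y + a*b) * y i)
          (fun _ _ => 0) (fun _ => 0)
          (fun i j => ((dotT x y + a*b) * star (dotT x y + a*b) + b * star b * gram w)⁻¹ * star b * y i * star (w j))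
        (((dotT x y + a*b) * star (dotT x y + a*b) + b * star b * gram w)⁻¹ * star (dotT x y + a*b) * b)
          (fun _ => 0) 0
          (fun j => ((dotT x y + a*b) * star (dotT x y + a*b) + b * star b * gram w)⁻¹ * b * star b * star (w j))
        (fun _ => 0)
          (fun i j => b * (b * star b + gram y)⁻¹ * (dotT x y + a*b)⁻¹ * w i * star (y j))
          (fun i => b * star b * (b * star b + gram y)⁻¹ * (dotT x y + a*b)⁻¹ * w i) (fun _ _ => 0))
    =
    blk 0 (fun j => (b * star b + gram y)⁻¹ * star (y j)) ((b * star b + gram y)⁻¹ * star b) (fun _ => 0)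
        (fun i => ((dotT x y + a*b) * star (dotT x y + a*b) + b * star b * gram w)⁻¹ * star (dotT x y + a*b) * y i)
          (fun _ _ => 0) (fun _ => 0)
          (fun i j => ((dotT x y + a*b) * star (dotT x y + a*b) + b * star b * gram w)⁻¹ * star b * y i * star (w j))
        (((dotT x y + a*b) * star (dotT x y + a*b) + b * star b * gram w)⁻¹ * star (dotT x y + a*b) * b)
          (fun _ => 0) 0
          (fun j => ((dotT x y + a*b) * star (dotT x y + a*b) + b * star b * gram w)⁻¹ * b * star b * star (w j))
        (fun _ => 0)
          (fun i j => b * (b * star b + gram y)⁻¹ * (dotT x y + a*b)⁻¹ * w i * star (y j))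
          (fun i => b * star b * (b * star b + gram y)⁻¹ * (dotT x y + a*b)⁻¹ * w i) (fun _ _ => 0) := by
  set ζ : ℂ := dotT x y + a * b with hζd
  set h : ℂ := b * star b + gram y with hhd
  set β : ℂ := ζ * star ζ + b * star b * gram w with hβd
  have hgy : (∑ i, star (y i) * y i) = gram y := rfl
  have hgw : (∑ i, star (w i) * w i) = gram w := rfl
  ext i j
  rcases i with (i|i) | (i|i) <;> rcases j with (j|j) | (j|j) <;>
    simp only [blk, Matrix.mul_apply, Matrix.of_apply, Fintype.sum_sum_type,
      Fintype.sum_unique, mul_zero, zero_mul, add_zero, zero_add, Finset.sum_const_zero]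
  case inl.inl.inl.inr =>
    rw [sum_pull (fun k => β⁻¹ * star b * ζ * star (w k) * (b * h⁻¹ * ζ⁻¹ * w k * star (y j)))
      (fun k => star (w k) * w k)
      (β⁻¹ * star b * ζ * (b * h⁻¹ * ζ⁻¹ * star (y j))) (fun k => by ring), hgw]
    field_simp
    try simp only [starRingEnd_apply]
    ring
  case inl.inl.inr.inl =>
    rw [sum_pull (fun k => β⁻¹ * star b * ζ * star (w k) * (b * star b * h⁻¹ * ζ⁻¹ * w k))
      (fun k => star (w k) * w k)
      (β⁻¹ * star b * ζ * (b * star b * h⁻¹ * ζ⁻¹)) (fun k => by ring), hgw]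
    field_simp
    try simp only [starRingEnd_apply]
    ring
  case inl.inr.inl.inl =>
    rw [sum_pull (fun k => h⁻¹ * y i * star (y k) * (β⁻¹ * star ζ * y k))
      (fun k => star (y k) * y k)
      (h⁻¹ * y i * (β⁻¹ * star ζ)) (fun k => by ring), hgy]
    field_simp
    try simp only [starRingEnd_apply]
    ring
  case inl.inr.inr.inr =>
    rw [sum_pull (fun k => h⁻¹ * y i * star (y k) * (β⁻¹ * star b * y k * star (w j)))
      (fun k => star (y k) * y k)
      (h⁻¹ * y i * (β⁻¹ * star b * star (w j))) (fun k => by ring), hgy]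
    field_simp
    try simp only [starRingEnd_apply]
    ring
  case inr.inl.inl.inl =>
    rw [sum_pull (fun k => h⁻¹ * b * star (y k) * (β⁻¹ * star ζ * y k))
      (fun k => star (y k) * y k)
      (h⁻¹ * b * (β⁻¹ * star ζ)) (fun k => by ring), hgy]
    field_simp
    try simp only [starRingEnd_apply]
    ring
  case inr.inl.inr.inr =>
    rw [sum_pull (fun k => h⁻¹ * b * star (y k) * (β⁻¹ * star b * y k * star (w j)))
      (fun k => star (y k) * y k)
      (h⁻¹ * b * (β⁻¹ * star b * star (w j))) (fun k => by ring), hgy]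
    field_simp
    try simp only [starRingEnd_apply]
    ring
  case inr.inr.inl.inr =>
    rw [sum_pull (fun k => β⁻¹ * b * star b * w i * star (w k) * (b * h⁻¹ * ζ⁻¹ * w k * star (y j)))
      (fun k => star (w k) * w k)
      (β⁻¹ * b * star b * w i * (b * h⁻¹ * ζ⁻¹ * star (y j))) (fun k => by ring), hgw]
    field_simp
    try simp only [starRingEnd_apply]
    ring
  case inr.inr.inr.inl =>
    rw [sum_pull (fun k => β⁻¹ * b * star b * w i * star (w k) * (b * star b * h⁻¹ * ζ⁻¹ * w k))
      (fun k => star (w k) * w k)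
      (β⁻¹ * b * star b * w i * (b * star b * h⁻¹ * ζ⁻¹)) (fun k => by ring), hgw]
    field_simp
    try simp only [starRingEnd_apply]
    ring
end

section
variable {m n : ℕ} (a b : ℂ) (x y : Fin m → ℂ) (z w : Fin n → ℂ)

set_option maxHeartbeats 1000000 in
lemma L8 :
    (blk (((dotT x y + a*b) * star (dotT x y + a*b) + b * star b * gram w)⁻¹ * ((dotT x y + a*b) * star (dotT x y + a*b)))
        (fun _ => 0) 0
        (fun j => ((dotT x y + a*b) * star (dotT x y + a*b) + b * star b * gram w)⁻¹ * star b * (dotT x y + a*b) * star (w j))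
        (fun _ => 0)
        (fun i j => (b * star b + gram y)⁻¹ * y i * star (y j))
        (fun i => (b * star b + gram y)⁻¹ * star b * y i) (fun _ _ => 0)
        0 (fun j => (b * star b + gram y)⁻¹ * b * star (y j)) ((b * star b + gram y)⁻¹ * (b * star b)) (fun _ => 0)
        (fun i => ((dotT x y + a*b) * star (dotT x y + a*b) + b * star b * gram w)⁻¹ * star (dotT x y + a*b) * b * w i)
        (fun _ _ => 0) (fun _ => 0)
        (fun i j => ((dotT x y + a*b) * star (dotT x y + a*b) + b * star b * gram w)⁻¹ * b * star b * w i * star (w j)))ᴴ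
    =
    blk (((dotT x y + a*b) * star (dotT x y + a*b) + b * star b * gram w)⁻¹ * ((dotT x y + a*b) * star (dotT x y + a*b)))
        (fun _ => 0) 0
        (fun j => ((dotT x y + a*b) * star (dotT x y + a*b) + b * star b * gram w)⁻¹ * star b * (dotT x y + a*b) * star (w j))
        (fun _ => 0)
        (fun i j => (b * star b + gram y)⁻¹ * y i * star (y j))
        (fun i => (b * star b + gram y)⁻¹ * star b * y i) (fun _ _ => 0)
        0 (fun j => (b * star b + gram y)⁻¹ * b * star (y j)) ((b * star b + gram y)⁻¹ * (b * star b)) (fun _ => 0)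
        (fun i => ((dotT x y + a*b) * star (dotT x y + a*b) + b * star b * gram w)⁻¹ * star (dotT x y + a*b) * b * w i)
        (fun _ _ => 0) (fun _ => 0)
        (fun i j => ((dotT x y + a*b) * star (dotT x y + a*b) + b * star b * gram w)⁻¹ * b * star b * w i * star (w j)) := by
  have hgys : star (gram y) = gram y := by
    simp [_root_.gram, star_sum, StarMul.star_mul, star_star, mul_comm]
  have hgws : star (gram w) = gram w := by
    simp [_root_.gram, star_sum, StarMul.star_mul, star_star, mul_comm]
  have hhs : star (b * star b + gram y) = b * star b + gram y := by
    rw [star_add, StarMul.star_mul, star_star, hgys, mul_comm]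
  have hβs : star ((dotT x y + a*b) * star (dotT x y + a*b) + b * star b * gram w)
      = (dotT x y + a*b) * star (dotT x y + a*b) + b * star b * gram w := by
    rw [star_add, StarMul.star_mul, star_star, StarMul.star_mul, StarMul.star_mul, star_star, hgws]
    ring
  ext i j
  rcases i with (i|i) | (i|i) <;> rcases j with (j|j) | (j|j) <;>
    simp only [blk, Matrix.conjTranspose_apply, Matrix.of_apply, star_zero, StarMul.star_mul,
      star_star, star_inv₀, hβs, hhs] <;>
    ring
end
theorem dsM_coreEP_caseII {m n : ℕ} (a b : ℂ) (ha : a ≠ 0) (hb : b ≠ 0)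
    (x y : Fin m → ℂ) (z w : Fin n → ℂ)
    (hxy : dotT x y ≠ 0) (hzw : dotT z w = 0)
    (hζ : dotT x y + a * b ≠ 0)
    (hh : b * star b + gram y ≠ 0)
    (hβ : (dotT x y + a * b) * star (dotT x y + a * b) + b * star b * gram w ≠ 0) :
    letI ζ := dotT x y + a * b
    letI M := dsM a b x y z w
    letI h := b * star b + gram y
    letI β := ζ * star ζ + b * star b * gram w
    letI X := blk 0 (fun j => h⁻¹ * star (y j)) (h⁻¹ * star b) (fun _ => 0)
        (fun i => β⁻¹ * star ζ * y i) (fun _ _ => 0) (fun _ => 0)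
          (fun i j => β⁻¹ * star b * y i * star (w j))
        (β⁻¹ * star ζ * b) (fun _ => 0) 0 (fun j => β⁻¹ * b * star b * star (w j))
        (fun _ => 0) (fun i j => b * h⁻¹ * ζ⁻¹ * w i * star (y j))
          (fun i => b * star b * h⁻¹ * ζ⁻¹ * w i) (fun _ _ => 0)
    X * M ^ 4 = M ^ 3 ∧ M * X ^ 2 = X ∧ (M * X)ᴴ = M * X := by
  
  refine ⟨?_, ?_, ?_⟩
  · have e4 : dsM a b x y z w ^ 4 = ((dsM a b x y z w * dsM a b x y z w) * dsM a b x y z w) * dsM a b x y z w := by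
      rw [pow_succ, pow_succ, pow_two]
    have e3 : dsM a b x y z w ^ 3 = (dsM a b x y z w * dsM a b x y z w) * dsM a b x y z w := by
      rw [pow_succ, pow_two]
    rw [e4, e3, L3 a b x y z w hzw, L4 a b x y z w hzw, L5 a b x y z w hζ hh hβ]
  · rw [pow_two, ← mul_assoc, L6 a b x y z w hzw hζ hh hβ, L7 a b x y w hζ hh hβ]
  · rw [L6 a b x y z w hzw hζ hh hβ]
    exact L8 a b x y w
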